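/- Let λ ∈ (0, 1). Let N ≥ 1 and let (y_k)_{k≥0} and (l_k)_{k≥1} be sequences of vectors in ℝ^N with y_0 = 0 and y_{k+1} = λ(2y_k − y_{k−1} + l_k) for all k ≥ 1. Then for every K ≥ 1, Σ_{k=1}^{K} ‖y_k‖² ≤ (2/(1 − λ)²) · ‖y_1‖² + (2λ²/((1 − λ)(1 − √λ)²)) · Σ_{s=1}^{K−1} ‖l_s‖². -/

import Mathlib

open Finset

private def gg (lam : ℝ) : ℕ → ℝ
  | 0 => 0
  | 1 => 1
  | (k+2) => lam * (2 * gg lam (k+1) - gg lam k)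

private lemma gg_inv (lam : ℝ) : ∀ k : ℕ,
    (gg lam (k+1) - lam * gg lam k)^2 + lam * (1-lam) * (gg lam k)^2 = lam ^ k := by
  intro k
  induction k with
  | zero => simp [gg]
  | succ n ih =>
      have h2 : gg lam (n+2) = lam * (2 * gg lam (n+1) - gg lam n) := rfl
      rw [show n+1+1 = n+2 from rfl, h2, pow_succ]
      linear_combination lam * ih

private lemma gg_sq_le (lam : ℝ) (k : ℕ) :
    lam * (1-lam) * (gg lam k)^2 ≤ lam ^ k := by
  have h := gg_inv lam k
  nlinarith [sq_nonneg (gg lam (k+1) - lam * gg lam k)]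

private lemma geo_le (μ : ℝ) (h0 : 0 ≤ μ) (h1 : μ < 1) (n : ℕ) :
    ∑ j ∈ range n, μ^j ≤ 1/(1-μ) := by
  rw [geom_sum_eq h1.ne n]
  rw [show (μ^n - 1)/(μ - 1) = (1 - μ^n)/(1-μ) by
    rw [← neg_div_neg_eq]; ring_nf]
  have hp : 0 ≤ μ ^ n := pow_nonneg h0 n
  gcongr
  · linarith

private lemma sum_pow_le₁ (μ : ℝ) (h0 : 0 ≤ μ) (h1 : μ < 1) (S : Finset ℕ) (c : ℕ)
    (hS : ∀ s ∈ S, s ≤ c) : ∑ s ∈ S, μ ^ (c - s) ≤ 1 / (1 - μ) := by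
  rw [show ∑ s ∈ S, μ ^ (c - s) = ∑ j ∈ S.image (fun s => c - s), μ ^ j by
    rw [Finset.sum_image]; intro x hx y hy hxy
    have := hS x hx; have := hS y hy; have hxy' : c - x = c - y := hxy; omega]
  refine le_trans (Finset.sum_le_sum_of_subset_of_nonneg ?_ ?_) (geo_le μ h0 h1 (c+1))
  · intro j hj
    simp only [Finset.mem_image] at hj
    obtain ⟨s, hs, rfl⟩ := hj
    simp only [Finset.mem_range]; omega
  · intro j _ _; positivity

private lemma sum_pow_le₂ (μ : ℝ) (h0 : 0 ≤ μ) (h1 : μ < 1) (S : Finset ℕ) (c n : ℕ)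
    (hS : ∀ s ∈ S, c ≤ s ∧ s ≤ n) : ∑ s ∈ S, μ ^ (s - c) ≤ 1 / (1 - μ) := by
  rw [show ∑ s ∈ S, μ ^ (s - c) = ∑ j ∈ S.image (fun s => s - c), μ ^ j by
    rw [Finset.sum_image]; intro x hx y hy hxy
    have := hS x hx; have := hS y hy; have hxy' : x - c = y - c := hxy; omega]
  refine le_trans (Finset.sum_le_sum_of_subset_of_nonneg ?_ ?_) (geo_le μ h0 h1 (n+1))
  · intro j hj
    simp only [Finset.mem_image] at hj
    obtain ⟨s, hs, rfl⟩ := hj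
    have := hS s hs
    simp only [Finset.mem_range]; omega
  · intro j _ _; positivity

private lemma closed_form (lam : ℝ) (N : ℕ)
    (y l : ℕ → EuclideanSpace ℝ (Fin N))
    (hy0 : y 0 = 0)
    (hrec : ∀ k, 1 ≤ k → y (k + 1) = lam • ((2 : ℝ) • y k - y (k - 1) + l k)) :
    ∀ k, y k = gg lam k • y 1 + lam • ∑ s ∈ Icc 1 (k-1), gg lam (k-s) • l s := by
  intro k
  induction k using Nat.twoStepInduction with
  | zero => simp [gg, hy0]
  | one => simp [gg]
  | more n ih1 ih2 =>
    have hr := hrec (n+1) (by omega)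
    simp only [Nat.add_sub_cancel] at hr ih2 ⊢
    have e2 : ∀ s ∈ Icc 1 n, gg lam (n+2-s) • l s
        = lam • ((2:ℝ) • (gg lam (n+1-s) • l s) - gg lam (n-s) • l s) := by
      intro s hs
      simp only [Finset.mem_Icc] at hs
      rw [show n+2-s = (n-s)+2 by omega, show n+1-s = (n-s)+1 by omega,
        show gg lam ((n-s)+2) = lam * (2 * gg lam ((n-s)+1) - gg lam (n-s)) from rfl]
      rw [smul_smul, smul_sub, smul_smul, smul_smul, ← sub_smul]
      ring_nf
    have e3 : ∑ s ∈ Icc 1 (n-1), gg lam (n-s) • l s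
        = ∑ s ∈ Icc 1 n, gg lam (n-s) • l s := by
      apply Finset.sum_subset
      · intro s hs; simp only [Finset.mem_Icc] at *; omega
      · intro s hs hns
        simp only [Finset.mem_Icc] at hs hns
        have : s = n := by omega
        subst this
        simp [gg]
    have eT : ∑ s ∈ Icc 1 (n+1), gg lam (n+2-s) • l s
        = lam • ((2:ℝ) • (∑ s ∈ Icc 1 n, gg lam (n+1-s) • l s)
            - ∑ s ∈ Icc 1 n, gg lam (n-s) • l s) + l (n+1) := by
      rw [Finset.sum_Icc_succ_top (by omega), show n+2-(n+1) = 1 by omega,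
        show gg lam 1 = 1 from rfl, one_smul, Finset.sum_congr rfl e2,
        ← Finset.smul_sum, Finset.sum_sub_distrib, ← Finset.smul_sum]
    rw [show n+2-1 = n+1 from rfl, hr, ih1, ih2, eT, e3,
      show gg lam (n+2) = lam * (2 * gg lam (n+1) - gg lam n) from rfl]
    module

theorem stmt_11 (lam : ℝ) (hlam : lam ∈ Set.Ioo (0 : ℝ) 1)
    (N : ℕ) (hN : 1 ≤ N)
    (y : ℕ → EuclideanSpace ℝ (Fin N)) (l : ℕ → EuclideanSpace ℝ (Fin N))
    (hy0 : y 0 = 0)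
    (hrec : ∀ k, 1 ≤ k → y (k + 1) = lam • ((2 : ℝ) • y k - y (k - 1) + l k))
    (K : ℕ) (hK : 1 ≤ K) :
    ∑ k ∈ Finset.Icc 1 K, ‖y k‖ ^ 2 ≤ (2 / (1 - lam) ^ 2) * ‖y 1‖ ^ 2 +
      (2 * lam ^ 2 / ((1 - lam) * (1 - Real.sqrt lam) ^ 2)) *
        ∑ s ∈ Finset.Icc 1 (K - 1), ‖l s‖ ^ 2 := by
  obtain ⟨hl0, hl1⟩ := hlam
  set μ := Real.sqrt lam with hμdef
  have hμ0 : 0 < μ := Real.sqrt_pos.mpr hl0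
  have hμsq : μ^2 = lam := Real.sq_sqrt hl0.le
  have hμ1 : μ < 1 := by nlinarith [Real.sqrt_nonneg lam]
  have hc : (0:ℝ) < 1 - lam := by linarith
  have hcμ : (0:ℝ) < 1 - μ := by linarith
  set c1 := Real.sqrt (1-lam) with hc1def
  have hc10 : 0 < c1 := Real.sqrt_pos.mpr hc
  have hc1sq : c1^2 = 1 - lam := Real.sq_sqrt hc.le
  -- bound on |gg|
  have gabs : ∀ j, 1 ≤ j → |gg lam j| ≤ μ^(j-1) / c1 := by
    intro j hj
    have h := gg_sq_le lam j
    have hpe : lam ^ j = lam ^ (j-1) * lam := by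
      rw [← pow_succ]; congr 1; omega
    have hsq : (gg lam j)^2 ≤ (μ^(j-1)/c1)^2 := by
      rw [div_pow, hc1sq, ← pow_mul, mul_comm (j-1) 2, pow_mul, hμsq, le_div_iff₀ hc]
      nlinarith [pow_nonneg hl0.le (j-1)]
    calc |gg lam j| = Real.sqrt ((gg lam j)^2) := (Real.sqrt_sq_eq_abs _).symm
      _ ≤ Real.sqrt ((μ^(j-1)/c1)^2) := Real.sqrt_le_sqrt hsq
      _ = μ^(j-1)/c1 := Real.sqrt_sq (by positivity)
  have cf := closed_form lam N y l hy0 hrec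
  -- pointwise norm bound
  have hA : ∀ k ∈ Icc 1 K, ‖y k‖ ≤ μ^(k-1)/c1 * ‖y 1‖
      + lam/c1 * ∑ s ∈ Icc 1 (k-1), μ^(k-s-1) * ‖l s‖ := by
    intro k hk
    simp only [Finset.mem_Icc] at hk
    rw [cf k]
    refine le_trans (norm_add_le _ _) (add_le_add ?_ ?_)
    · rw [norm_smul, Real.norm_eq_abs]
      exact mul_le_mul_of_nonneg_right (gabs k hk.1) (norm_nonneg _)
    · rw [norm_smul, Real.norm_eq_abs, abs_of_pos hl0]
      have hin : ‖∑ s ∈ Icc 1 (k-1), gg lam (k-s) • l s‖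
          ≤ ∑ s ∈ Icc 1 (k-1), μ^(k-s-1)/c1 * ‖l s‖ := by
        refine le_trans (norm_sum_le _ _) (Finset.sum_le_sum ?_)
        intro s hs
        simp only [Finset.mem_Icc] at hs
        rw [norm_smul, Real.norm_eq_abs]
        exact mul_le_mul_of_nonneg_right (gabs (k-s) (by omega)) (norm_nonneg _)
      calc lam * ‖∑ s ∈ Icc 1 (k-1), gg lam (k-s) • l s‖
          ≤ lam * ∑ s ∈ Icc 1 (k-1), μ^(k-s-1)/c1 * ‖l s‖ :=
            mul_le_mul_of_nonneg_left hin hl0.le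
        _ = lam/c1 * ∑ s ∈ Icc 1 (k-1), μ^(k-s-1) * ‖l s‖ := by
            rw [Finset.mul_sum, Finset.mul_sum]
            exact Finset.sum_congr rfl fun s _ => by ring
  -- squared pointwise bound
  have hB : ∀ k ∈ Icc 1 K, ‖y k‖^2 ≤ 2/(1-lam) * lam^(k-1) * ‖y 1‖^2
      + (2*lam^2/((1-lam)*(1-μ))) * ∑ s ∈ Icc 1 (k-1), μ^(k-s-1) * ‖l s‖^2 := by
    intro k hk
    have h1 := hA k hk
    simp only [Finset.mem_Icc] at hk
    set a := μ^(k-1)/c1 * ‖y 1‖ with hadef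
    set b := lam/c1 * ∑ s ∈ Icc 1 (k-1), μ^(k-s-1) * ‖l s‖ with hbdef
    have hsum0 : (0:ℝ) ≤ ∑ s ∈ Icc 1 (k-1), μ^(k-s-1) * ‖l s‖ :=
      Finset.sum_nonneg fun s _ => by positivity
    have hsum0' : (0:ℝ) ≤ ∑ s ∈ Icc 1 (k-1), μ^(k-s-1) * ‖l s‖^2 :=
      Finset.sum_nonneg fun s _ => by positivity
    have ha : 0 ≤ a := by positivity
    have hb : 0 ≤ b := by rw [hbdef]; positivity
    have h2 : ‖y k‖^2 ≤ 2*a^2 + 2*b^2 := by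
      nlinarith [norm_nonneg (y k), sq_nonneg (a - b)]
    have ha2 : a^2 = lam^(k-1)*‖y 1‖^2/(1-lam) := by
      rw [hadef, mul_pow, div_pow, ← pow_mul, mul_comm (k-1) 2, pow_mul, hμsq, hc1sq]
      ring
    -- Cauchy-Schwarz
    set ν := Real.sqrt μ with hνdef
    have hν0 : 0 < ν := Real.sqrt_pos.mpr hμ0
    have hνsq : ν^2 = μ := Real.sq_sqrt hμ0.le
    have cauchy : (∑ s ∈ Icc 1 (k-1), μ^(k-s-1)*‖l s‖)^2
        ≤ (∑ s ∈ Icc 1 (k-1), μ^(k-s-1)) * ∑ s ∈ Icc 1 (k-1), μ^(k-s-1)*‖l s‖^2 := by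
      have key := Finset.sum_mul_sq_le_sq_mul_sq (Icc 1 (k-1))
        (fun s => ν^(k-s-1)) (fun s => ν^(k-s-1)*‖l s‖)
      have e1 : ∀ s ∈ Icc 1 (k-1), ν^(k-s-1) * (ν^(k-s-1)*‖l s‖) = μ^(k-s-1)*‖l s‖ := by
        intro s _
        rw [← mul_assoc, ← sq, ← pow_mul, mul_comm (k-s-1) 2, pow_mul, hνsq]
      have e2 : ∀ s ∈ Icc 1 (k-1), (ν^(k-s-1))^2 = μ^(k-s-1) := by
        intro s _
        rw [← pow_mul, mul_comm (k-s-1) 2, pow_mul, hνsq]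
      have e3 : ∀ s ∈ Icc 1 (k-1), (ν^(k-s-1)*‖l s‖)^2 = μ^(k-s-1)*‖l s‖^2 := by
        intro s hs
        rw [mul_pow, e2 s hs]
      rw [Finset.sum_congr rfl e1, Finset.sum_congr rfl e2, Finset.sum_congr rfl e3] at key
      exact key
    have geo1 : ∑ s ∈ Icc 1 (k-1), μ^(k-s-1) ≤ 1/(1-μ) := by
      rw [Finset.sum_congr rfl (fun s _ => by rw [show k-s-1 = (k-1)-s by omega])]
      exact sum_pow_le₁ μ hμ0.le hμ1 _ (k-1)
        (fun s hs => by simp only [Finset.mem_Icc] at hs; omega)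
    have hb2 : b^2 ≤ lam^2/((1-lam)*(1-μ)) * ∑ s ∈ Icc 1 (k-1), μ^(k-s-1)*‖l s‖^2 := by
      have e : b^2 = lam^2/(1-lam) * (∑ s ∈ Icc 1 (k-1), μ^(k-s-1)*‖l s‖)^2 := by
        rw [hbdef, mul_pow, div_pow, hc1sq]
      rw [e]
      calc lam^2/(1-lam) * (∑ s ∈ Icc 1 (k-1), μ^(k-s-1)*‖l s‖)^2
          ≤ lam^2/(1-lam) * ((1/(1-μ)) * ∑ s ∈ Icc 1 (k-1), μ^(k-s-1)*‖l s‖^2) := by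
            refine mul_le_mul_of_nonneg_left ?_ (by positivity)
            exact le_trans cauchy (mul_le_mul_of_nonneg_right geo1 hsum0')
        _ = lam^2/((1-lam)*(1-μ)) * ∑ s ∈ Icc 1 (k-1), μ^(k-s-1)*‖l s‖^2 := by
            field_simp
    calc ‖y k‖^2 ≤ 2*a^2 + 2*b^2 := h2
      _ ≤ 2*(lam^(k-1)*‖y 1‖^2/(1-lam))
          + 2*(lam^2/((1-lam)*(1-μ)) * ∑ s ∈ Icc 1 (k-1), μ^(k-s-1)*‖l s‖^2) := by
          rw [← ha2]; linarith [hb2]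
      _ = 2/(1-lam) * lam^(k-1) * ‖y 1‖^2
          + (2*lam^2/((1-lam)*(1-μ))) * ∑ s ∈ Icc 1 (k-1), μ^(k-s-1)*‖l s‖^2 := by
          ring
  -- sum up
  have hsumB := Finset.sum_le_sum hB
  have split : ∑ k ∈ Icc 1 K, (2/(1-lam) * lam^(k-1) * ‖y 1‖^2
        + (2*lam^2/((1-lam)*(1-μ))) * ∑ s ∈ Icc 1 (k-1), μ^(k-s-1) * ‖l s‖^2)
      = 2/(1-lam) * ‖y 1‖^2 * (∑ k ∈ Icc 1 K, lam^(k-1))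
        + (2*lam^2/((1-lam)*(1-μ)))
          * ∑ k ∈ Icc 1 K, ∑ s ∈ Icc 1 (k-1), μ^(k-s-1) * ‖l s‖^2 := by
    rw [Finset.sum_add_distrib, Finset.mul_sum, Finset.mul_sum]
    congr 1
    · exact Finset.sum_congr rfl fun k _ => by ring
  have geo2 : ∑ k ∈ Icc 1 K, lam^(k-1) ≤ 1/(1-lam) :=
    sum_pow_le₂ lam hl0.le hl1 _ 1 K
      (fun s hs => by simp only [Finset.mem_Icc] at hs; omega)
  -- Fubini swap
  have swap : ∑ k ∈ Icc 1 K, ∑ s ∈ Icc 1 (k-1), μ^(k-s-1) * ‖l s‖^2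
      = ∑ s ∈ Ico 1 (K+1), ∑ k ∈ Ico (s+1) (K+1), μ^(k-s-1) * ‖l s‖^2 := by
    rw [show Icc 1 K = Ico 1 (K+1) by rw [Finset.Ico_add_one_right_eq_Icc]]
    rw [Finset.sum_congr rfl (fun k _ => by
      rw [show Icc 1 (k-1) = Ico 1 k by ext x; simp only [Finset.mem_Icc, Finset.mem_Ico]; omega])]
    rw [← Finset.sum_Ico_Ico_comm' 1 (K+1) (fun s k => μ^(k-s-1) * ‖l s‖^2)]
  have drop : ∑ s ∈ Ico 1 (K+1), ∑ k ∈ Ico (s+1) (K+1), μ^(k-s-1) * ‖l s‖^2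
      = ∑ s ∈ Icc 1 (K-1), ∑ k ∈ Ico (s+1) (K+1), μ^(k-s-1) * ‖l s‖^2 := by
    symm
    apply Finset.sum_subset
    · intro s hs; simp only [Finset.mem_Icc, Finset.mem_Ico] at *; omega
    · intro s hs hns
      simp only [Finset.mem_Icc, Finset.mem_Ico] at hs hns
      have : s = K := by omega
      subst this
      simp
  have inner_bound : ∀ s ∈ Icc 1 (K-1),
      ∑ k ∈ Ico (s+1) (K+1), μ^(k-s-1) * ‖l s‖^2 ≤ 1/(1-μ) * ‖l s‖^2 := by
    intro s hs
    rw [← Finset.sum_mul]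
    apply mul_le_mul_of_nonneg_right _ (by positivity)
    rw [Finset.sum_congr rfl (fun k _ => by rw [show k-s-1 = k-(s+1) by omega])]
    exact sum_pow_le₂ μ hμ0.le hμ1 _ (s+1) K
      (fun k hk => by simp only [Finset.mem_Ico] at hk; omega)
  have S2le : ∑ s ∈ Icc 1 (K-1), ∑ k ∈ Ico (s+1) (K+1), μ^(k-s-1)*‖l s‖^2
      ≤ 1/(1-μ) * ∑ s ∈ Icc 1 (K-1), ‖l s‖^2 := by
    rw [Finset.mul_sum]
    exact Finset.sum_le_sum inner_bound
  calc ∑ k ∈ Icc 1 K, ‖y k‖^2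
      ≤ ∑ k ∈ Icc 1 K, (2/(1-lam) * lam^(k-1) * ‖y 1‖^2
        + (2*lam^2/((1-lam)*(1-μ))) * ∑ s ∈ Icc 1 (k-1), μ^(k-s-1) * ‖l s‖^2) := hsumB
    _ = 2/(1-lam) * ‖y 1‖^2 * (∑ k ∈ Icc 1 K, lam^(k-1))
        + (2*lam^2/((1-lam)*(1-μ)))
          * ∑ k ∈ Icc 1 K, ∑ s ∈ Icc 1 (k-1), μ^(k-s-1) * ‖l s‖^2 := split
    _ ≤ 2/(1-lam) * ‖y 1‖^2 * (1/(1-lam))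
        + (2*lam^2/((1-lam)*(1-μ))) * (1/(1-μ) * ∑ s ∈ Icc 1 (K-1), ‖l s‖^2) := by
        apply add_le_add
        · exact mul_le_mul_of_nonneg_left geo2 (by positivity)
        · rw [swap, drop]
          exact mul_le_mul_of_nonneg_left S2le (by positivity)
    _ = (2 / (1 - lam) ^ 2) * ‖y 1‖ ^ 2
        + (2 * lam ^ 2 / ((1 - lam) * (1 - μ) ^ 2)) * ∑ s ∈ Icc 1 (K-1), ‖l s‖ ^ 2 := by
        field_simp
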